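/- Let G be a multi r-edge-colored complete graph on n vertices with r ≥ 3, such that every color has exactly r − 1 monochromatic components, every two components of different colors intersect in exactly n/(r−1)² vertices, and every edge has either 1 or r colors. Then any r − 1 monochromatic components of pairwise different colors cover at most (1 − (r−2)/(r−1)²)·n vertices, with equality attainable when the r−1 components share a common intersection of size n/(r−1)². -/
import Mathlib

section Aux

variable {V : Type*} {r : ℕ}

private def mcComp (col : V → V → Finset (Fin r)) (i : Fin r) (v : V) : Set V :=
  {u : V | u = v ∨ i ∈ col u v}

private lemma cmp_self (col : V → V → Finset (Fin r)) (i : Fin r) (v : V) :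
    v ∈ mcComp col i v := Or.inl rfl

private lemma cmp_symm (col : V → V → Finset (Fin r))
    (hsymm : ∀ u v : V, col u v = col v u)
    {i : Fin r} {u v : V} (h : u ∈ mcComp col i v) : v ∈ mcComp col i u := by
  rcases h with rfl | h
  · exact Or.inl rfl
  · exact Or.inr (by rw [hsymm v u]; exact h)

private lemma cmp_trans (col : V → V → Finset (Fin r))
    (hsymm : ∀ u v : V, col u v = col v u)
    (htrans : ∀ u v w : V, ∀ i : Fin r, i ∈ col u v → i ∈ col v w → u ≠ w → i ∈ col u w)
    {i : Fin r} {x u v : V} (h1 : x ∈ mcComp col i u) (h2 : u ∈ mcComp col i v) :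
    x ∈ mcComp col i v := by
  rcases h1 with rfl | h1
  · exact h2
  · rcases h2 with rfl | h2
    · exact Or.inr h1
    · by_cases hxv : x = v
      · exact Or.inl hxv
      · exact Or.inr (htrans x u v i h1 h2 hxv)

private lemma cmp_eq_of_mem (col : V → V → Finset (Fin r))
    (hsymm : ∀ u v : V, col u v = col v u)
    (htrans : ∀ u v w : V, ∀ i : Fin r, i ∈ col u v → i ∈ col v w → u ≠ w → i ∈ col u w)
    {i : Fin r} {x v : V} (hx : x ∈ mcComp col i v) :
    mcComp col i v = mcComp col i x := by
  ext y
  constructor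
  · intro hy; exact cmp_trans col hsymm htrans hy (cmp_symm col hsymm hx)
  · intro hy; exact cmp_trans col hsymm htrans hy hx

end Aux

/-- In a multi r-edge-colored complete graph on n vertices (r ≥ 3)
where every color has exactly r − 1 monochromatic components, any two components
of different colors meet in exactly n/(r−1)² vertices, and every edge has 1 or r
colors, any r − 1 monochromatic components of pairwise different colors cover at
most (1 − (r−2)/(r−1)²)·n vertices, with equality when they share a common
intersection of size n/(r−1)². -/
theorem stmt_19 {V : Type*} [Fintype V] [DecidableEq V] (r : ℕ) (hr : 3 ≤ r)
    (col : V → V → Finset (Fin r))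
    (hsymm : ∀ u v : V, col u v = col v u)
    (htrans : ∀ u v w : V, ∀ i : Fin r,
      i ∈ col u v → i ∈ col v w → u ≠ w → i ∈ col u w)
    (hcomps : ∀ i : Fin r,
      Set.ncard {C : Set V | ∃ v : V, C = {u : V | u = v ∨ i ∈ col u v}} = r - 1)
    (hinter : ∀ i j : Fin r, i ≠ j → ∀ C C' : Set V,
      (∃ v : V, C = {u : V | u = v ∨ i ∈ col u v}) →
      (∃ v : V, C' = {u : V | u = v ∨ j ∈ col u v}) →
      (r - 1) ^ 2 * (C ∩ C').ncard = Fintype.card V)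
    (hcols : ∀ u v : V, u ≠ v → (col u v).card = 1 ∨ (col u v).card = r) :
    (∀ (I : Finset (Fin r)) (D : Fin r → Set V), I.card = r - 1 →
      (∀ i ∈ I, ∃ v : V, D i = {u : V | u = v ∨ i ∈ col u v}) →
      (Set.ncard (⋃ i ∈ I, D i) : ℝ) ≤
        (1 - ((r : ℝ) - 2) / ((r : ℝ) - 1) ^ 2) * Fintype.card V) ∧
    (∀ (I : Finset (Fin r)) (D : Fin r → Set V), I.card = r - 1 →
      (∀ i ∈ I, ∃ v : V, D i = {u : V | u = v ∨ i ∈ col u v}) →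
      (r - 1) ^ 2 * (⋂ i ∈ I, D i).ncard = Fintype.card V →
      (Set.ncard (⋃ i ∈ I, D i) : ℝ) =
        (1 - ((r : ℝ) - 2) / ((r : ℝ) - 1) ^ 2) * Fintype.card V) := by
  obtain ⟨s, rfl⟩ : ∃ s, r = s + 3 := ⟨r - 3, by omega⟩
  set n := Fintype.card V with hn
  -- V is nonempty
  have hV : Nonempty V := by
    by_contra hne
    rw [not_nonempty_iff] at hne
    have h0 := hcomps ⟨0, by omega⟩
    have hemp : {C : Set V | ∃ v : V, C =
        {u : V | u = v ∨ (⟨0, by omega⟩ : Fin (s+3)) ∈ col u v}} = ∅ := by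
      ext C
      simp only [Set.mem_setOf_eq, Set.mem_empty_iff_false, iff_false]
      rintro ⟨v, -⟩
      exact hne.elim v
    rw [hemp, Set.ncard_empty] at h0
    omega
  obtain ⟨v₀⟩ := hV
  have hne01 : (⟨0, by omega⟩ : Fin (s+3)) ≠ ⟨1, by omega⟩ := by
    simp [Fin.ext_iff]
  set b := ((mcComp col ⟨0, by omega⟩ v₀ : Set V) ∩ mcComp col ⟨1, by omega⟩ v₀).ncard with hbdef
  have hb : (s + 2) ^ 2 * b = n :=
    hinter ⟨0, by omega⟩ ⟨1, by omega⟩ hne01 _ _ ⟨v₀, rfl⟩ ⟨v₀, rfl⟩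
  have hball : ∀ i j : Fin (s+3), i ≠ j → ∀ C C' : Set V,
      (∃ v, C = mcComp col i v) → (∃ v, C' = mcComp col j v) → (C ∩ C').ncard = b := by
    intro i j hij C C' hC hC'
    have h1 : (s+2) ^ 2 * (C ∩ C').ncard = n := hinter i j hij C C' hC hC'
    have h2 : (s+2) ^ 2 * (C ∩ C').ncard = (s+2) ^ 2 * b := by rw [h1, ← hb]
    exact Nat.eq_of_mul_eq_mul_left (by positivity) h2
  -- size of any component
  have hcard : ∀ (i : Fin (s+3)) (C : Set V), (∃ v, C = mcComp col i v) →
      C.ncard = (s+2) * b := by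
    intro i C hC
    obtain ⟨j, hj⟩ := Fintype.exists_ne_of_one_lt_card
      (by simp only [Fintype.card_fin]; omega) i
    obtain ⟨v, rfl⟩ := hC
    set S := {C' : Set V | ∃ w : V, C' = mcComp col j w} with hS
    have hSfin : S.Finite := Set.toFinite S
    have hScard : hSfin.toFinset.card = s + 2 := by
      rw [← Set.ncard_eq_toFinset_card _ hSfin]
      exact hcomps j
    set t : Set V → Finset V := fun C' => ((mcComp col i v : Set V) ∩ C').toFinite.toFinset
      with ht
    have hdisj : ∀ x ∈ hSfin.toFinset, ∀ y ∈ hSfin.toFinset, x ≠ y →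
        Disjoint (t x) (t y) := by
      intro x hx y hy hxy
      rw [Finset.disjoint_left]
      intro a ha hay
      apply hxy
      rw [Set.Finite.mem_toFinset] at hx hy
      obtain ⟨w1, rfl⟩ := hx
      obtain ⟨w2, rfl⟩ := hy
      have ha' : a ∈ mcComp col j w1 := (Set.Finite.mem_toFinset _ |>.mp ha).2
      have hay' : a ∈ mcComp col j w2 := (Set.Finite.mem_toFinset _ |>.mp hay).2
      exact (cmp_eq_of_mem col hsymm htrans ha').trans
        (cmp_eq_of_mem col hsymm htrans hay').symm
    have hCU : (mcComp col i v : Set V).toFinite.toFinset = hSfin.toFinset.biUnion t := by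
      ext x
      simp only [Set.Finite.mem_toFinset, Finset.mem_biUnion, Set.mem_inter_iff,
        Set.mem_setOf_eq, hS, ht]
      constructor
      · intro hx
        exact ⟨mcComp col j x, ⟨x, rfl⟩, hx, cmp_self col j x⟩
      · rintro ⟨_, _, hx, _⟩
        exact hx
    have hterm : ∀ C' ∈ hSfin.toFinset, (t C').card = b := by
      intro C' hC'
      rw [Set.Finite.mem_toFinset] at hC'
      have hbb := hball i j (Ne.symm hj) (mcComp col i v) C' ⟨v, rfl⟩ hC'
      rw [← hbb]
      exact (Set.ncard_eq_toFinset_card _ _).symm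
    calc (mcComp col i v : Set V).ncard
        = (hSfin.toFinset.biUnion t).card := by
          rw [Set.ncard_eq_toFinset_card _ (mcComp col i v : Set V).toFinite, hCU]
      _ = ∑ C' ∈ hSfin.toFinset, (t C').card := Finset.card_biUnion hdisj
      _ = ∑ _C' ∈ hSfin.toFinset, b := Finset.sum_congr rfl hterm
      _ = (s+2) * b := by rw [Finset.sum_const, hScard, smul_eq_mul]
  have hnr : (n : ℝ) = ((s:ℝ)+2) ^ 2 * b := by exact_mod_cast hb.symm
  constructor
  · -- inequality
    intro I D hI hD
    have hIne : I.Nonempty := Finset.card_pos.mp (by rw [hI]; omega)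
    obtain ⟨i₀, hi₀⟩ := hIne
    set F : Fin (s+3) → Finset V := fun i => (D i).toFinite.toFinset with hF
    have hFm : ∀ (i : Fin (s+3)) (x : V), x ∈ F i ↔ x ∈ D i :=
      fun i x => Set.Finite.mem_toFinset _
    have hU : (⋃ i ∈ I, D i).ncard = (I.biUnion F).card := by
      rw [← Set.ncard_coe_finset]
      congr 1
      ext x
      simp only [Set.mem_iUnion, Finset.coe_biUnion, Finset.mem_coe,
        Finset.mem_biUnion, hFm, Set.mem_iUnion, exists_prop]
    have hsub : I.biUnion F ⊆ F i₀ ∪ (I.erase i₀).biUnion (fun i => F i \ F i₀) := by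
      intro x hx
      rw [Finset.mem_biUnion] at hx
      obtain ⟨i, hiI, hxi⟩ := hx
      by_cases hx0 : x ∈ F i₀
      · exact Finset.mem_union_left _ hx0
      · refine Finset.mem_union_right _ ?_
        rw [Finset.mem_biUnion]
        have hii : i ≠ i₀ := by rintro rfl; exact hx0 hxi
        exact ⟨i, Finset.mem_erase.mpr ⟨hii, hiI⟩, Finset.mem_sdiff.mpr ⟨hxi, hx0⟩⟩
    have hFcard : ∀ i ∈ I, (F i).card = (s+2) * b := by
      intro i hi
      rw [← Set.ncard_eq_toFinset_card _ (D i).toFinite]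
      exact hcard i (D i) (hD i hi)
    have hFint : ∀ i ∈ I, i ≠ i₀ → (F i ∩ F i₀).card = b := by
      intro i hi hne
      have hcoe : ((F i ∩ F i₀ : Finset V) : Set V) = D i ∩ D i₀ := by
        ext x; simp [hFm]
      rw [← Set.ncard_coe_finset, hcoe]
      exact hball i i₀ hne (D i) (D i₀) (hD i hi) (hD i₀ hi₀)
    have hsd : ∀ i ∈ I.erase i₀, (F i \ F i₀).card ≤ (s+1) * b := by
      intro i hi
      rw [Finset.mem_erase] at hi
      have h1 := Finset.card_sdiff_add_card_inter (F i) (F i₀)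
      rw [hFcard i hi.2, hFint i hi.2 hi.1,
        show (s+2)*b = (s+1)*b + b from by ring] at h1
      exact le_of_eq (Nat.add_right_cancel h1)
    have hmain : (I.biUnion F).card ≤ (s+2)*b + (s+1)*((s+1)*b) := by
      calc (I.biUnion F).card
          ≤ (F i₀ ∪ (I.erase i₀).biUnion fun i => F i \ F i₀).card :=
            Finset.card_le_card hsub
        _ ≤ (F i₀).card + ((I.erase i₀).biUnion fun i => F i \ F i₀).card :=
            Finset.card_union_le _ _
        _ ≤ (F i₀).card + ∑ i ∈ I.erase i₀, (F i \ F i₀).card := by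
            gcongr
            exact Finset.card_biUnion_le
        _ ≤ (s+2)*b + ∑ _i ∈ I.erase i₀, (s+1)*b := by
            rw [hFcard i₀ hi₀]
            gcongr with i hi
            exact hsd i hi
        _ = (s+2)*b + (s+1)*((s+1)*b) := by
            rw [Finset.sum_const, smul_eq_mul, Finset.card_erase_of_mem hi₀, hI,
              show s+3-1-1 = s+1 from by omega]
    rw [hU]
    have hcast : ((I.biUnion F).card : ℝ) ≤ (((s+2)*b + (s+1)*((s+1)*b) : ℕ) : ℝ) := by
      exact_mod_cast hmain
    refine hcast.trans (le_of_eq ?_)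
    push_cast
    rw [hnr, show ((s:ℝ)+3-2) = (s:ℝ)+1 from by ring,
      show ((s:ℝ)+3-1) = (s:ℝ)+2 from by ring]
    have hne0 : ((s:ℝ)+2) ≠ 0 := by positivity
    field_simp
    ring
  · -- equality
    intro I D hI hD hT
    have hIne : I.Nonempty := Finset.card_pos.mp (by rw [hI]; omega)
    obtain ⟨i₀, hi₀⟩ := hIne
    set T := ⋂ i ∈ I, D i with hTdef
    have hTb : T.ncard = b :=
      Nat.eq_of_mul_eq_mul_left (show 0 < (s+2)^2 by positivity) (hT.trans hb.symm)
    have hTsub : ∀ i ∈ I, T ⊆ D i := fun i hi => Set.iInter₂_subset i hi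
    have hpair : ∀ i ∈ I, ∀ j ∈ I, i ≠ j → D i ∩ D j = T := by
      intro i hi j hj hij
      have h1 : T ⊆ D i ∩ D j := Set.subset_inter (hTsub i hi) (hTsub j hj)
      have h2 : (D i ∩ D j).ncard = b := hball i j hij _ _ (hD i hi) (hD j hj)
      exact (Set.eq_of_subset_of_ncard_le h1 (by rw [h2, hTb]) (Set.toFinite _)).symm
    set F : Fin (s+3) → Finset V := fun i => (D i).toFinite.toFinset with hF
    set Ft : Finset V := T.toFinite.toFinset with hFt
    have hFm : ∀ (i : Fin (s+3)) (x : V), x ∈ F i ↔ x ∈ D i :=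
      fun i x => Set.Finite.mem_toFinset _
    have hFtm : ∀ x : V, x ∈ Ft ↔ x ∈ T := fun x => Set.Finite.mem_toFinset _
    have hFtcard : Ft.card = b := by
      rw [← Set.ncard_eq_toFinset_card _ T.toFinite]
      exact hTb
    have hFtsub : ∀ i ∈ I, Ft ⊆ F i := by
      intro i hi x hx
      rw [hFm]
      exact hTsub i hi ((hFtm x).mp hx)
    have hUeq : I.biUnion F = Ft ∪ I.biUnion (fun i => F i \ Ft) := by
      ext x
      simp only [Finset.mem_biUnion, Finset.mem_union, Finset.mem_sdiff]
      constructor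
      · rintro ⟨i, hi, hx⟩
        by_cases hxT : x ∈ Ft
        · exact Or.inl hxT
        · exact Or.inr ⟨i, hi, hx, hxT⟩
      · rintro (hxT | ⟨i, hi, hx, -⟩)
        · exact ⟨i₀, hi₀, hFtsub i₀ hi₀ hxT⟩
        · exact ⟨i, hi, hx⟩
    have hdisjFt : Disjoint Ft (I.biUnion fun i => F i \ Ft) := by
      rw [Finset.disjoint_left]
      intro a ha hmem
      rw [Finset.mem_biUnion] at hmem
      obtain ⟨i, hi, hai⟩ := hmem
      exact (Finset.mem_sdiff.mp hai).2 ha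
    have hdisjpair : ∀ i ∈ I, ∀ j ∈ I, i ≠ j → Disjoint (F i \ Ft) (F j \ Ft) := by
      intro i hi j hj hij
      rw [Finset.disjoint_left]
      intro a hai haj
      rw [Finset.mem_sdiff] at hai haj
      apply hai.2
      rw [hFtm]
      have hmem : a ∈ D i ∩ D j := ⟨(hFm i a).mp hai.1, (hFm j a).mp haj.1⟩
      rw [hpair i hi j hj hij] at hmem
      exact hmem
    have hsdcard : ∀ i ∈ I, (F i \ Ft).card = (s+1) * b := by
      intro i hi
      have hFic : (F i).card = (s+2) * b := by
        rw [← Set.ncard_eq_toFinset_card _ (D i).toFinite]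
        exact hcard i (D i) (hD i hi)
      rw [Finset.card_sdiff_of_subset (hFtsub i hi), hFtcard, hFic,
        show (s+2)*b = (s+1)*b + b from by ring, Nat.add_sub_cancel]
    have htotal : (I.biUnion F).card = b + (s+2)*((s+1)*b) := by
      rw [hUeq, Finset.card_union_of_disjoint hdisjFt, Finset.card_biUnion hdisjpair,
        hFtcard, Finset.sum_congr rfl hsdcard, Finset.sum_const, hI, smul_eq_mul,
        show s+3-1 = s+2 from by omega]
    have hU : (⋃ i ∈ I, D i).ncard = (I.biUnion F).card := by
      rw [← Set.ncard_coe_finset]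
      congr 1
      ext x
      simp only [Set.mem_iUnion, Finset.coe_biUnion, Finset.mem_coe,
        Finset.mem_biUnion, hFm, Set.mem_iUnion, exists_prop]
    rw [hU, htotal]
    push_cast
    rw [hnr, show ((s:ℝ)+3-2) = (s:ℝ)+1 from by ring,
      show ((s:ℝ)+3-1) = (s:ℝ)+2 from by ring]
    have hne0 : ((s:ℝ)+2) ≠ 0 := by positivity
    field_simp
    ring
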